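/- arXiv:2302.07386 — 4 statements merged into one kernel-verified Lean document; each statement's English description precedes it below -/
import Mathlib

section
/- Weak duality for the D-optimality continuous relaxation: if x is feasible for max{log det(A^T diag(x) A) : e^T x = s, l ≤ x ≤ u} with A^T diag(x) A ≻ 0, and (Λ, λ, θ, ν) satisfies Λ ≻ 0, λ ≥ 0, θ ≥ 0, and Λ • v_i v_i^T − λ_i + θ_i − ν = 0 for all i ∈ N, then log det(A^T diag(x) A) ≤ −log det Λ + λ^T u − θ^T l + ν s − m. -/
open scoped Matrix

lemma trace_eq_sum_eig {m : ℕ} {M : Matrix (Fin m) (Fin m) ℝ} (hM : M.IsHermitian) :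
    M.trace = ∑ i, hM.eigenvalues i := by
  conv_lhs => rw [hM.spectral_theorem]
  rw [Unitary.conjStarAlgAut_apply, Matrix.trace_mul_cycle, Unitary.coe_star_mul_self]
  simp [Matrix.trace_diagonal]

lemma log_det_le_trace {m : ℕ} {M : Matrix (Fin m) (Fin m) ℝ} (hM : M.PosSemidef)
    (hd : 0 < M.det) : Real.log M.det ≤ M.trace - m := by
  have hH := hM.1
  have hprod : M.det = ∏ i, hH.eigenvalues i := by
    rw [hH.det_eq_prod_eigenvalues]; norm_num
  have hpos : ∀ i, 0 < hH.eigenvalues i := by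
    intro i
    rcases lt_or_eq_of_le (hM.eigenvalues_nonneg i) with h | h
    · exact h
    · exfalso
      rw [hprod, Finset.prod_eq_zero (Finset.mem_univ i) h.symm] at hd
      exact lt_irrefl 0 hd
  rw [hprod, Real.log_prod (fun i _ => (hpos i).ne'), trace_eq_sum_eig hH]
  calc ∑ i, Real.log (hH.eigenvalues i) ≤ ∑ i, (hH.eigenvalues i - 1) :=
        Finset.sum_le_sum (fun i _ => Real.log_le_sub_one_of_pos (hpos i))
    _ = (∑ i, hH.eigenvalues i) - m := by rw [Finset.sum_sub_distrib]; simp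

open scoped MatrixOrder in
lemma conj_key {m : ℕ} {L B : Matrix (Fin m) (Fin m) ℝ} (hL : L.PosDef) (hB : B.PosDef) :
    ∃ M : Matrix (Fin m) (Fin m) ℝ, M.PosSemidef ∧ M.det = L.det * B.det ∧
      M.trace = (L * B).trace := by
  set S := CFC.sqrt L with hSdef
  have hS : S.PosSemidef := Matrix.nonneg_iff_posSemidef.mp (CFC.sqrt_nonneg L)
  have hSS : S * S = L := CFC.sqrt_mul_sqrt_self L hL.posSemidef.nonneg
  refine ⟨S * B * S, ?_, ?_, ?_⟩
  · have := hB.posSemidef.mul_mul_conjTranspose_same S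
    rwa [hS.1] at this
  · rw [Matrix.det_mul, Matrix.det_mul, mul_right_comm, ← Matrix.det_mul, hSS]
  · rw [Matrix.trace_mul_cycle, hSS]

lemma decompB {n m : ℕ} (A : Matrix (Fin n) (Fin m) ℝ) (x : Fin n → ℝ) :
    A.transpose * Matrix.diagonal x * A = ∑ i, x i • Matrix.vecMulVec (A i) (A i) := by
  ext j k
  simp [Matrix.mul_apply, Matrix.diagonal_apply, Matrix.vecMulVec_apply, Finset.sum_apply,
    Matrix.sum_apply, mul_comm, mul_assoc, mul_left_comm]

theorem weak_duality_dopt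
    (n m : ℕ) (A : Matrix (Fin n) (Fin m) ℝ) (l u x : Fin n → ℝ) (s : ℝ)
    (hfeas : (∑ i, x i) = s ∧ ∀ i, l i ≤ x i ∧ x i ≤ u i)
    (hpd : (A.transpose * Matrix.diagonal x * A).PosDef)
    (Λ : Matrix (Fin m) (Fin m) ℝ) (lam θ : Fin n → ℝ) (ν : ℝ)
    (hΛ : Λ.PosDef) (hlam : ∀ i, 0 ≤ lam i) (hθ : ∀ i, 0 ≤ θ i)
    (hdualc : ∀ i : Fin n,
      (Λ.transpose * Matrix.vecMulVec (A i) (A i)).trace - lam i + θ i - ν = 0) :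
    Real.log (A.transpose * Matrix.diagonal x * A).det ≤
      -Real.log Λ.det + (∑ i, lam i * u i) - (∑ i, θ i * l i) + ν * s - m := by
  set B := A.transpose * Matrix.diagonal x * A with hBdef
  have hLdet : 0 < Λ.det := hΛ.det_pos
  have hBdet : 0 < B.det := hpd.det_pos
  obtain ⟨M, hMpsd, hMdet, hMtr⟩ := conj_key hΛ hpd
  have h1 := log_det_le_trace hMpsd (by rw [hMdet]; positivity)
  rw [hMdet, hMtr, Real.log_mul hLdet.ne' hBdet.ne'] at h1
  -- trace identity
  have hsym : Λ.transpose = Λ := by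
    rw [← Matrix.conjTranspose_eq_transpose_of_trivial]; exact hΛ.isHermitian
  have htr : (Λ * B).trace = ∑ i, x i * (lam i - θ i + ν) := by
    rw [hBdef, decompB, Finset.mul_sum, Matrix.trace_sum]
    refine Finset.sum_congr rfl (fun i _ => ?_)
    rw [mul_smul_comm, Matrix.trace_smul, smul_eq_mul]
    have := hdualc i
    rw [hsym] at this
    have h2 : (Λ * Matrix.vecMulVec (A i) (A i)).trace = lam i - θ i + ν := by linarith
    rw [h2]
  -- bound the trace
  have hbound : ∑ i, x i * (lam i - θ i + ν) ≤
      (∑ i, lam i * u i) - (∑ i, θ i * l i) + ν * s := by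
    have : ∑ i, x i * (lam i - θ i + ν)
        = (∑ i, lam i * x i) - (∑ i, θ i * x i) + ν * (∑ i, x i) := by
      rw [Finset.mul_sum, ← Finset.sum_sub_distrib, ← Finset.sum_add_distrib]
      exact Finset.sum_congr rfl (fun i _ => by ring)
    rw [this, hfeas.1]
    have h3 : ∑ i, lam i * x i ≤ ∑ i, lam i * u i :=
      Finset.sum_le_sum (fun i _ => mul_le_mul_of_nonneg_left (hfeas.2 i).2 (hlam i))
    have h4 : ∑ i, θ i * l i ≤ ∑ i, θ i * x i :=
      Finset.sum_le_sum (fun i _ => mul_le_mul_of_nonneg_left (hfeas.2 i).1 (hθ i))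
    linarith
  rw [htr] at h1
  linarith
end

section
/- Rank-one SVD update identity: Let A = U Σ V^T with U ∈ R^{s×m} having orthonormal columns, Σ ∈ R^{m×m}, V ∈ R^{m×m} orthogonal. Let e_φ ∈ R^s be a standard basis vector, w ∈ R^m, p = (I − U U^T) e_φ with p ≠ 0, and K = [Σ V^T + U^T e_φ w^T ; ‖p‖ w^T] ∈ R^{(m+1)×m}. If K = Ũ Σ̃ Ṽ^T is an SVD of K, then A + e_φ w^T = ([U, p/‖p‖] Ũ) Σ̃ Ṽ^T, and moreover [U, p/‖p‖] has orthonormal columns. -/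
open scoped Matrix

theorem svd_rank_one_update (s m : ℕ)
    (A U : Matrix (Fin s) (Fin m) ℝ) (Sm V : Matrix (Fin m) (Fin m) ℝ)
    (hU : U.transpose * U = 1) (hV : V.transpose * V = 1)
    (hA : A = U * Sm * V.transpose)
    (φ : Fin s) (w : Fin m → ℝ)
    (eφ : Fin s → ℝ) (heφ : eφ = fun i => if i = φ then 1 else 0)
    (p : Fin s → ℝ) (hp : p = eφ - U *ᵥ (U.transpose *ᵥ eφ))
    (hp0 : p ≠ 0)
    (np : ℝ) (hnp : np = Real.sqrt (p ⬝ᵥ p))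
    (K : Matrix (Fin m ⊕ Fin 1) (Fin m) ℝ)
    (hK : K = Matrix.fromRows
      (Sm * V.transpose + Matrix.vecMulVec (U.transpose *ᵥ eφ) w)
      (Matrix.of fun (_ : Fin 1) j => np * w j))
    (Ut : Matrix (Fin m ⊕ Fin 1) (Fin m ⊕ Fin 1) ℝ)
    (St : Matrix (Fin m ⊕ Fin 1) (Fin m) ℝ)
    (Vt : Matrix (Fin m) (Fin m) ℝ)
    (hUt : Ut.transpose * Ut = 1) (hVt : Vt.transpose * Vt = 1)
    (hKsvd : K = Ut * St * Vt.transpose)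
    (W : Matrix (Fin s) (Fin m ⊕ Fin 1) ℝ)
    (hW : W = Matrix.fromCols U (Matrix.of fun i (_ : Fin 1) => p i / np)) :
    A + Matrix.vecMulVec eφ w = (W * Ut) * St * Vt.transpose ∧
    W.transpose * W = 1 := by
  -- basic facts about np
  have hpp0 : p ⬝ᵥ p ≠ 0 := fun h => hp0 (dotProduct_self_eq_zero.mp h)
  have hppnn : 0 ≤ p ⬝ᵥ p := Finset.sum_nonneg fun i _ => mul_self_nonneg _
  have hnp0 : np ≠ 0 := by
    rw [hnp]
    exact Real.sqrt_ne_zero'.mpr (lt_of_le_of_ne hppnn (Ne.symm hpp0))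
  have hnpsq : np * np = p ⬝ᵥ p := by
    rw [hnp]; exact Real.mul_self_sqrt hppnn
  -- U^T p = 0
  have hUp : U.transpose *ᵥ p = 0 := by
    rw [hp, Matrix.mulVec_sub, Matrix.mulVec_mulVec, hU, Matrix.one_mulVec, sub_self]
  -- blocks of Wᵀ W
  have h12 : U.transpose * (Matrix.of fun i (_ : Fin 1) => p i / np) = 0 := by
    ext k j
    have hk := congrFun hUp k
    simp only [Matrix.mulVec, dotProduct, Pi.zero_apply] at hk
    simp only [Matrix.mul_apply, Matrix.transpose_apply, Matrix.of_apply, Matrix.zero_apply,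
      div_eq_mul_inv, ← mul_assoc, ← Finset.sum_mul]
    simp only [Matrix.transpose_apply] at hk
    rw [hk, zero_mul]
  have h21 : (Matrix.of fun i (_ : Fin 1) => p i / np).transpose * U = 0 := by
    have := congrArg Matrix.transpose h12
    simpa [Matrix.transpose_mul] using this
  have h22 : (Matrix.of fun i (_ : Fin 1) => p i / np).transpose *
      (Matrix.of fun i (_ : Fin 1) => p i / np) = 1 := by
    ext j k
    have hjk : j = k := Subsingleton.elim _ _
    subst hjk
    simp only [Matrix.mul_apply, Matrix.one_apply_eq, Matrix.transpose_apply, Matrix.of_apply,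
      div_mul_div_comm, ← Finset.sum_div, hnpsq]
    rw [show (p ⬝ᵥ p) = ∑ i, p i * p i from rfl] at hpp0 ⊢
    exact div_self hpp0
  have hWW : W.transpose * W = 1 := by
    rw [hW, Matrix.transpose_fromCols, Matrix.fromRows_mul_fromCols, hU, h12, h21, h22,
      Matrix.fromBlocks_one]
  -- W * K = A + eφ wᵀ
  have hmv : ∀ x : Fin m → ℝ, U * Matrix.vecMulVec x w
      = Matrix.vecMulVec (U *ᵥ x) w := by
    intro x
    ext i j
    simp only [Matrix.mul_apply, Matrix.vecMulVec_apply, Matrix.mulVec, dotProduct,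
      Finset.sum_mul, mul_assoc]
  have hPR : (Matrix.of fun i (_ : Fin 1) => p i / np) *
      (Matrix.of fun (_ : Fin 1) j => np * w j) = Matrix.vecMulVec p w := by
    ext i j
    simp only [Matrix.mul_apply, Matrix.vecMulVec_apply, Matrix.of_apply, Fin.sum_univ_one]
    field_simp
  have hsplit : Matrix.vecMulVec eφ w
      = Matrix.vecMulVec (U *ᵥ (U.transpose *ᵥ eφ)) w + Matrix.vecMulVec p w := by
    ext i j
    have hpi := congrFun hp i
    simp only [Pi.sub_apply] at hpi
    simp [Matrix.vecMulVec_apply, hpi]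
    ring
  have hWK : W * K = A + Matrix.vecMulVec eφ w := by
    rw [hW, hK, Matrix.fromCols_mul_fromRows, Matrix.mul_add, hmv _, hPR, hA, Matrix.mul_assoc, hsplit]
    abel
  refine ⟨?_, hWW⟩
  rw [← hWK, hKsvd, ← Matrix.mul_assoc, ← Matrix.mul_assoc]
end

section
/- Hadamard-type bound: for any x ∈ {0,1}^n with e^T x = s and matrix A with rows v_1^T,...,v_n^T such that A^T diag(x) A is positive definite, log det(Σ_ℓ x_ℓ v_ℓ v_ℓ^T) ≤ Σ_{ℓ=1}^{s} log(1 + φ_ℓ^2(A)), where φ_ℓ(A) is the ℓ-th greatest Euclidean norm among the rows of A. -/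
open scoped Matrix

open Matrix Finset in
lemma my_trace_eq_sum_eigenvalues {k : ℕ} {A : Matrix (Fin k) (Fin k) ℝ} (hA : A.IsHermitian) :
    A.trace = ∑ i, hA.eigenvalues i := by
  conv_lhs => rw [hA.spectral_theorem]
  rw [Unitary.conjStarAlgAut_apply, Matrix.trace_mul_comm, ← Matrix.mul_assoc]
  rw [Matrix.mem_unitaryGroup_iff'.mp (hA.eigenvectorUnitary).2, Matrix.one_mul,
    Matrix.trace_diagonal]
  simp

open Matrix Finset in
lemma my_hadamard {k : ℕ} {N : Matrix (Fin k) (Fin k) ℝ} (hN : N.PosSemidef)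
    (hd : ∀ i, 0 < N i i) : N.det ≤ ∏ i, N i i := by
  rcases Nat.eq_zero_or_pos k with hk | hk
  · subst hk
    simp [Matrix.det_fin_zero]
  set c : Fin k → ℝ := fun i => Real.sqrt (N i i)⁻¹ with hc
  have hcpos : ∀ i, 0 < c i := fun i => Real.sqrt_pos.mpr (inv_pos.mpr (hd i))
  have hcsq : ∀ i, c i ^ 2 = (N i i)⁻¹ := fun i =>
    Real.sq_sqrt (inv_nonneg.mpr (hd i).le)
  set E : Matrix (Fin k) (Fin k) ℝ := Matrix.diagonal c with hE
  have hEH : Eᴴ = E := by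
    rw [hE, Matrix.diagonal_conjTranspose]
    congr 1
  have hK : (E * N * E).PosSemidef := by
    have := hN.mul_mul_conjTranspose_same E
    rwa [hEH] at this
  set K := E * N * E with hKdef
  have hKdiag : ∀ i, K i i = 1 := by
    intro i
    have : K i i = c i * N i i * c i := by
      simp [hKdef, hE, Matrix.mul_diagonal, Matrix.diagonal_mul]
    rw [this]
    have : c i * N i i * c i = N i i * c i ^ 2 := by ring
    rw [this, hcsq i, mul_inv_cancel₀ (hd i).ne']
  have hH := hK.1
  set μ := hH.eigenvalues with hμ
  have hμ0 : ∀ i, 0 ≤ μ i := fun i => hK.eigenvalues_nonneg i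
  have htr : ∑ i, μ i = (k : ℝ) := by
    rw [← my_trace_eq_sum_eigenvalues hH]
    rw [Matrix.trace]
    simp only [Matrix.diag_apply]
    rw [Finset.sum_congr rfl fun i _ => hKdiag i]
    simp
  have hdetK : K.det = ∏ i, μ i := by
    have := hH.det_eq_prod_eigenvalues
    simpa using this
  have hkR : (0:ℝ) < (k:ℝ) := by exact_mod_cast hk
  have hgm := Real.geom_mean_le_arith_mean_weighted Finset.univ (fun _ => (k:ℝ)⁻¹) μ
    (fun i _ => by positivity) (by simp [Finset.card_univ]; field_simp) (fun i _ => hμ0 i)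
  have hsum1 : ∑ i, (k:ℝ)⁻¹ * μ i = 1 := by
    rw [← Finset.mul_sum, htr, inv_mul_cancel₀ hkR.ne']
  have hprod_le_one : ∏ i, μ i ^ ((k:ℝ)⁻¹) ≤ 1 := by
    calc ∏ i, μ i ^ ((k:ℝ)⁻¹) ≤ ∑ i, (k:ℝ)⁻¹ * μ i := hgm
    _ = 1 := hsum1
  have hdetK1 : K.det ≤ 1 := by
    rw [hdetK]
    have h1 : ∀ i, μ i = (μ i ^ ((k:ℝ)⁻¹)) ^ (k : ℕ) := by
      intro i
      rw [← Real.rpow_natCast (μ i ^ ((k:ℝ)⁻¹)) k, ← Real.rpow_mul (hμ0 i),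
        inv_mul_cancel₀ hkR.ne', Real.rpow_one]
    calc ∏ i, μ i = ∏ i, (μ i ^ ((k:ℝ)⁻¹)) ^ (k : ℕ) := Finset.prod_congr rfl fun i _ => h1 i
    _ = (∏ i, μ i ^ ((k:ℝ)⁻¹)) ^ (k : ℕ) := by rw [Finset.prod_pow]
    _ ≤ 1 ^ (k : ℕ) := by
        apply pow_le_pow_left₀ _ hprod_le_one
        exact Finset.prod_nonneg fun i _ => Real.rpow_nonneg (hμ0 i) _
    _ = 1 := one_pow _
  have hdetE : E.det = ∏ i, c i := Matrix.det_diagonal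
  have hdetKN : K.det = (∏ i, c i) ^ 2 * N.det := by
    rw [hKdef, Matrix.det_mul, Matrix.det_mul, hdetE]; ring
  have hcc : (∏ i, c i) ^ 2 * ∏ i, N i i = 1 := by
    rw [← Finset.prod_pow, ← Finset.prod_mul_distrib]
    rw [Finset.prod_congr rfl fun i _ => by rw [hcsq i, inv_mul_cancel₀ (hd i).ne']]
    exact Finset.prod_const_one
  have hNdet : N.det = K.det * ∏ i, N i i := by
    rw [hdetKN]
    have : (∏ i, c i) ^ 2 * N.det * ∏ i, N i i = N.det * ((∏ i, c i) ^ 2 * ∏ i, N i i) := by ring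
    rw [this, hcc, mul_one]
  rw [hNdet]
  calc K.det * ∏ i, N i i ≤ 1 * ∏ i, N i i := by
        apply mul_le_mul_of_nonneg_right hdetK1
        exact Finset.prod_nonneg fun i _ => (hd i).le
  _ = ∏ i, N i i := one_mul _

open Matrix Finset in
lemma my_strictMono_le {s n : ℕ} (f : Fin s → Fin n) (hf : StrictMono f) :
    ∀ j (h : j < s), j ≤ (f ⟨j, h⟩ : ℕ) := by
  intro j
  induction j with
  | zero => intro h; exact Nat.zero_le _
  | succ j ih =>
    intro h
    have h' : j < s := Nat.lt_of_succ_lt h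
    have h1 := ih h'
    have h2 : f ⟨j, h'⟩ < f ⟨j + 1, h⟩ := hf (by simp [Fin.lt_def])
    have h3 := Fin.lt_def.mp h2
    omega

open Matrix Finset in
lemma my_prod_le {n s : ℕ} (hsn : s ≤ n) (g : Fin n → ℝ) (hg1 : ∀ ℓ, 1 ≤ g ℓ)
    (hganti : Antitone g) (T : Finset (Fin n)) (hT : T.card = s) :
    ∏ ℓ ∈ T, g ℓ ≤ ∏ ℓ ∈ Finset.univ.filter (fun ℓ : Fin n => (ℓ:ℕ) < s), g ℓ := by
  set e := T.orderEmbOfFin hT with he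
  have hTmap : T = Finset.univ.map e.toEmbedding := by
    ext a
    simp only [Finset.mem_map, Finset.mem_univ, true_and]
    constructor
    · intro ha
      have := Finset.range_orderEmbOfFin T hT
      rw [Set.ext_iff] at this
      have h2 := (this a).mpr (by exact_mod_cast ha)
      obtain ⟨i, hi⟩ := h2
      exact ⟨i, hi⟩
    · rintro ⟨i, rfl⟩
      exact Finset.orderEmbOfFin_mem T hT i
  have hSmap : Finset.univ.filter (fun ℓ : Fin n => (ℓ:ℕ) < s)
      = Finset.univ.map (Fin.castLEEmb hsn) := by
    ext a
    simp only [Finset.mem_filter, Finset.mem_univ, true_and, Finset.mem_map]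
    constructor
    · intro ha
      exact ⟨⟨(a:ℕ), ha⟩, by simp [Fin.ext_iff]⟩
    · rintro ⟨i, rfl⟩
      simpa using i.2.trans_le hsn
  rw [hTmap, hSmap, Finset.prod_map, Finset.prod_map]
  apply Finset.prod_le_prod
  · intro i _
    exact le_trans zero_le_one (hg1 _)
  · intro i _
    apply hganti
    rw [Fin.le_def]
    simpa using my_strictMono_le e e.strictMono i i.2

open Matrix Finset in
lemma my_det_le_det_one_add {k : ℕ} {M : Matrix (Fin k) (Fin k) ℝ} (hM : M.PosSemidef) :
    M.det ≤ (1 + M).det := by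
  have hH := hM.1
  set U : Matrix (Fin k) (Fin k) ℝ := (hH.eigenvectorUnitary : Matrix (Fin k) (Fin k) ℝ) with hUdef
  have hU : U * star U = 1 := Matrix.mem_unitaryGroup_iff.mp (hH.eigenvectorUnitary).2
  set D : Matrix (Fin k) (Fin k) ℝ := Matrix.diagonal (RCLike.ofReal ∘ hH.eigenvalues) with hDdef
  have h1 : (1 : Matrix (Fin k) (Fin k) ℝ) + M = U * (1 + D) * star U := by
    rw [Matrix.mul_add, Matrix.add_mul, Matrix.mul_one, hU]
    congr 1
    exact hH.spectral_theorem
  have h2 : (1 + M).det = ∏ i, (1 + hH.eigenvalues i) := by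
    rw [h1, Matrix.det_mul_right_comm, hU, Matrix.one_mul, hDdef, ← Matrix.diagonal_one,
      Matrix.diagonal_add, Matrix.det_diagonal]
    simp
  have h3 : M.det = ∏ i, hH.eigenvalues i := by
    simpa using hH.det_eq_prod_eigenvalues
  rw [h2, h3]
  apply Finset.prod_le_prod
  · intro i _; exact hM.eigenvalues_nonneg i
  · intro i _; linarith

theorem hadamard_bound (n m s : ℕ) (hsn : s ≤ n)
    (A : Matrix (Fin n) (Fin m) ℝ)
    (x : Fin n → ℝ) (hx01 : ∀ ℓ, x ℓ = 0 ∨ x ℓ = 1)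
    (hxs : (∑ ℓ, x ℓ) = s)
    (hpd : (A.transpose * Matrix.diagonal x * A).PosDef)
    (φ : Fin n → ℝ) (π : Equiv.Perm (Fin n))
    (hφdec : Antitone φ)
    (hφ : ∀ ℓ, φ ℓ = Real.sqrt (A (π ℓ) ⬝ᵥ A (π ℓ))) :
    Real.log (∑ ℓ : Fin n, x ℓ • Matrix.vecMulVec (A ℓ) (A ℓ)).det ≤
      ∑ ℓ : Fin n, if (ℓ : ℕ) < s then Real.log (1 + φ ℓ ^ 2) else 0 := by
  classical
  set M := A.transpose * Matrix.diagonal x * A with hM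
  have hx2 : ∀ ℓ, x ℓ * x ℓ = x ℓ := by
    intro ℓ; rcases hx01 ℓ with h | h <;> simp [h]
  have hq0 : ∀ ℓ : Fin n, 0 ≤ A ℓ ⬝ᵥ A ℓ := fun ℓ =>
    Finset.sum_nonneg fun j _ => mul_self_nonneg _
  have hsum : (∑ ℓ : Fin n, x ℓ • Matrix.vecMulVec (A ℓ) (A ℓ)) = M := by
    ext i j
    rw [Matrix.sum_apply, hM, Matrix.mul_assoc, Matrix.mul_apply]
    apply Finset.sum_congr rfl
    intro k _
    simp only [Matrix.smul_apply, Matrix.vecMulVec_apply, smul_eq_mul,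
      Matrix.transpose_apply, Matrix.diagonal_mul]
    ring
  set B := Matrix.diagonal x * A with hB
  have hDD : Matrix.diagonal x * Matrix.diagonal x = Matrix.diagonal x := by
    rw [Matrix.diagonal_mul_diagonal]
    exact congrArg Matrix.diagonal (funext fun ℓ => hx2 ℓ)
  have hMB : Bᵀ * B = M := by
    rw [hB, hM, Matrix.transpose_mul, Matrix.diagonal_transpose, Matrix.mul_assoc,
      ← Matrix.mul_assoc (Matrix.diagonal x), hDD, ← Matrix.mul_assoc]
  have hBBt : (B * Bᵀ).PosSemidef := by
    have h := Matrix.posSemidef_self_mul_conjTranspose B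
    have hBH : Bᴴ = Bᵀ := by
      ext i j; simp [Matrix.conjTranspose_apply]
    rwa [hBH] at h
  have hNpsd : ((1 : Matrix (Fin n) (Fin n) ℝ) + B * Bᵀ).PosSemidef :=
    (Matrix.PosDef.add_posSemidef Matrix.PosDef.one hBBt).posSemidef
  have hNdiag : ∀ ℓ, ((1 : Matrix (Fin n) (Fin n) ℝ) + B * Bᵀ) ℓ ℓ
      = 1 + x ℓ * (A ℓ ⬝ᵥ A ℓ) := by
    intro ℓ
    rw [Matrix.add_apply, Matrix.one_apply_eq]
    congr 1
    rw [Matrix.mul_apply, dotProduct, Finset.mul_sum]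
    apply Finset.sum_congr rfl
    intro j _
    simp only [hB, Matrix.transpose_apply, Matrix.diagonal_mul]
    have h := hx2 ℓ
    calc x ℓ * A ℓ j * (x ℓ * A ℓ j) = (x ℓ * x ℓ) * (A ℓ j * A ℓ j) := by ring
    _ = x ℓ * (A ℓ j * A ℓ j) := by rw [h]
  have hNd_pos : ∀ ℓ, 0 < ((1 : Matrix (Fin n) (Fin n) ℝ) + B * Bᵀ) ℓ ℓ := by
    intro ℓ
    rw [hNdiag ℓ]
    have := hq0 ℓ
    rcases hx01 ℓ with h | h <;> simp [h] <;> linarith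
  have hchain : M.det ≤ ∏ ℓ, (1 + x ℓ * (A ℓ ⬝ᵥ A ℓ)) := by
    calc M.det ≤ ((1 : Matrix (Fin m) (Fin m) ℝ) + M).det :=
          my_det_le_det_one_add hpd.posSemidef
    _ = ((1 : Matrix (Fin n) (Fin n) ℝ) + B * Bᵀ).det := by
        rw [← hMB]; exact Matrix.det_one_add_mul_comm Bᵀ B
    _ ≤ ∏ ℓ, ((1 : Matrix (Fin n) (Fin n) ℝ) + B * Bᵀ) ℓ ℓ := my_hadamard hNpsd hNd_pos
    _ = ∏ ℓ, (1 + x ℓ * (A ℓ ⬝ᵥ A ℓ)) := Finset.prod_congr rfl fun ℓ _ => hNdiag ℓ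
  set g : Fin n → ℝ := fun ℓ => 1 + (A (π ℓ) ⬝ᵥ A (π ℓ)) with hg
  have hφ2 : ∀ ℓ, φ ℓ ^ 2 = A (π ℓ) ⬝ᵥ A (π ℓ) := fun ℓ => by
    rw [hφ ℓ, Real.sq_sqrt (hq0 _)]
  have hg1 : ∀ ℓ, 1 ≤ g ℓ := fun ℓ => le_add_of_nonneg_right (hq0 _)
  have hganti : Antitone g := by
    intro a b hab
    have h0 : 0 ≤ φ b := by rw [hφ b]; exact Real.sqrt_nonneg _
    have h1 : φ b ^ 2 ≤ φ a ^ 2 := pow_le_pow_left₀ h0 (hφdec hab) 2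
    have h2 := hφ2 a
    have h3 := hφ2 b
    simp only [hg]
    rw [← h2, ← h3]
    linarith
  set T := Finset.univ.filter (fun ℓ : Fin n => x (π ℓ) = 1) with hTdef
  have hTcard : T.card = s := by
    have h1 : (∑ ℓ, x (π ℓ)) = (s:ℝ) := by rw [Equiv.sum_comp π x, hxs]
    have h2 : (∑ ℓ, x (π ℓ)) = (T.card : ℝ) := by
      rw [Finset.sum_congr rfl fun ℓ _ => show x (π ℓ) = if x (π ℓ) = 1 then (1:ℝ) else 0 by
        rcases hx01 (π ℓ) with h | h <;> simp [h]]
      rw [Finset.sum_boole, hTdef]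
    exact Nat.cast_injective (h2.symm.trans h1)
  have hLT : (∏ ℓ, (1 + x ℓ * (A ℓ ⬝ᵥ A ℓ))) = ∏ ℓ ∈ T, g ℓ := by
    rw [← Equiv.prod_comp π (fun ℓ => 1 + x ℓ * (A ℓ ⬝ᵥ A ℓ)), hTdef, Finset.prod_filter]
    apply Finset.prod_congr rfl
    intro ℓ _
    rcases hx01 (π ℓ) with h | h <;> simp [h, hg]
  have hfinal : M.det ≤ ∏ ℓ ∈ Finset.univ.filter (fun ℓ : Fin n => (ℓ:ℕ) < s), g ℓ :=
    (hchain.trans_eq hLT).trans (my_prod_le hsn g hg1 hganti T hTcard)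
  rw [hsum]
  have hRHS : (∑ ℓ : Fin n, if (ℓ:ℕ) < s then Real.log (1 + φ ℓ ^ 2) else 0)
      = Real.log (∏ ℓ ∈ Finset.univ.filter (fun ℓ : Fin n => (ℓ:ℕ) < s), g ℓ) := by
    rw [Real.log_prod]
    · rw [← Finset.sum_filter]
      apply Finset.sum_congr rfl
      intro ℓ _
      simp only [hg]
      rw [← hφ2 ℓ]
    · intro ℓ _
      have := hg1 ℓ
      linarith
  rw [hRHS]
  exact Real.log_le_log hpd.det_pos hfinal
end

section
/- Spectral bound: for any x ∈ {0,1}^n with e^T x = s and matrix A with rows v_1^T,...,v_n^T such that A^T diag(x) A is positive definite, log det(Σ_ℓ x_ℓ v_ℓ v_ℓ^T) ≤ Σ_{ℓ=1}^{s} log(1 + σ_ℓ^2(A)), where σ_ℓ(A) denotes the ℓ-th greatest singular value of A (with σ_ℓ(A) := 0 for ℓ > m). -/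
open scoped Matrix
open Matrix

lemma one_le_det_one_add {k : ℕ} {M : Matrix (Fin k) (Fin k) ℝ} (hM : M.PosSemidef) :
    1 ≤ (1 + M).det := by
  have hH := hM.1
  have hspec := hH.spectral_theorem
  set W := (hH.eigenvectorUnitary : Matrix (Fin k) (Fin k) ℝ) with hWdef
  have hWW : W * star W = 1 := Matrix.mem_unitaryGroup_iff.mp hH.eigenvectorUnitary.2
  have h1 : (1 + M) = W * (Matrix.diagonal (fun i => (1:ℝ) + hH.eigenvalues i)) * star W := by
    have : Matrix.diagonal (fun i => (1:ℝ) + hH.eigenvalues i)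
        = 1 + Matrix.diagonal (RCLike.ofReal ∘ hH.eigenvalues) := by
      rw [← Matrix.diagonal_one, Matrix.diagonal_add]
      rfl
    rw [this, Matrix.mul_add, Matrix.add_mul, mul_one, hWW]
    exact congrArg (1 + ·) (hspec.trans (Unitary.conjStarAlgAut_apply _ _))
  rw [h1, Matrix.det_mul_right_comm, hWW, one_mul, Matrix.det_diagonal]
  have := Finset.prod_le_prod (s := Finset.univ) (f := fun _ : Fin k => (1:ℝ))
    (g := fun i => 1 + hH.eigenvalues i) (fun i _ => by norm_num)
    (fun i _ => le_add_of_nonneg_right (hM.eigenvalues_nonneg i))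
  simpa using this

open scoped MatrixOrder in
lemma det_le_det_add {k : ℕ} {B P : Matrix (Fin k) (Fin k) ℝ} (hB : B.PosDef)
    (hP : P.PosSemidef) : B.det ≤ (B + P).det := by
  have hRps : (CFC.sqrt B).PosSemidef := (CFC.sqrt_nonneg B).posSemidef
  set R := CFC.sqrt B with hRdef
  have hRR : R * R = B := CFC.sqrt_mul_sqrt_self B hB.posSemidef.nonneg
  have hdet : R.det * R.det = B.det := by rw [← Matrix.det_mul, hRR]
  have hBpos : 0 < B.det := hB.det_pos
  have hRdet : IsUnit R.det := by
    refine isUnit_iff_ne_zero.mpr fun h => ?_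
    rw [h, mul_zero] at hdet; linarith
  have hRinv : R * R⁻¹ = 1 := Matrix.mul_nonsing_inv R hRdet
  have hRinv' : R⁻¹ * R = 1 := Matrix.nonsing_inv_mul R hRdet
  have hRinvH : R⁻¹.IsHermitian := hRps.isHermitian.inv
  have hMx : (R⁻¹ * P * R⁻¹).PosSemidef := by
    have := hP.conjTranspose_mul_mul_same R⁻¹
    rwa [hRinvH.eq] at this
  have key : B + P = R * (1 + R⁻¹ * P * R⁻¹) * R := by
    rw [Matrix.mul_add, mul_one, Matrix.add_mul, hRR]
    congr 1
    symm
    calc R * (R⁻¹ * P * R⁻¹) * R = (R * R⁻¹) * P * (R⁻¹ * R) := by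
          simp only [Matrix.mul_assoc]
      _ = P := by rw [hRinv, hRinv', one_mul, mul_one]
  have h1 : 1 ≤ (1 + R⁻¹ * P * R⁻¹).det := one_le_det_one_add hMx
  rw [key, Matrix.det_mul, Matrix.det_mul]
  nlinarith

theorem spectral_bound (n m s : ℕ) (hmn : m ≤ n) (hsn : s ≤ n)
    (A : Matrix (Fin n) (Fin m) ℝ)
    (x : Fin n → ℝ) (hx01 : ∀ ℓ, x ℓ = 0 ∨ x ℓ = 1)
    (hxs : (∑ ℓ, x ℓ) = s)
    (hpd : (A.transpose * Matrix.diagonal x * A).PosDef)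
    (σ : Fin n → ℝ) (hσdec : Antitone σ) (hσ0 : ∀ ℓ, 0 ≤ σ ℓ)
    (hσzero : ∀ ℓ : Fin n, m ≤ (ℓ : ℕ) → σ ℓ = 0)
    (U : Matrix (Fin n) (Fin n) ℝ) (V : Matrix (Fin m) (Fin m) ℝ)
    (hU : U.transpose * U = 1) (hV : V.transpose * V = 1)
    (hsvd : A = U * (Matrix.of fun (i : Fin n) (j : Fin m) =>
      if (i : ℕ) = (j : ℕ) then σ i else 0) * V.transpose) :
    Real.log (∑ ℓ : Fin n, x ℓ • Matrix.vecMulVec (A ℓ) (A ℓ)).det ≤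
      ∑ ℓ : Fin n, if (ℓ : ℕ) < s then Real.log (1 + σ ℓ ^ 2) else 0 := by
  classical
  set Sg : Matrix (Fin n) (Fin m) ℝ := Matrix.of fun (i : Fin n) (j : Fin m) =>
      if (i : ℕ) = (j : ℕ) then σ i else 0 with hSgdef
  -- the sum equals Aᵀ D A
  have hSeq : (∑ ℓ : Fin n, x ℓ • Matrix.vecMulVec (A ℓ) (A ℓ))
      = A.transpose * Matrix.diagonal x * A := by
    ext i j
    rw [Matrix.mul_assoc, Matrix.mul_apply]
    rw [Matrix.sum_apply]
    refine Finset.sum_congr rfl fun ℓ _ => ?_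
    simp only [Matrix.smul_apply, Matrix.vecMulVec_apply, smul_eq_mul,
      Matrix.transpose_apply, Matrix.diagonal_mul]
    ring
  -- m ≤ s
  have hms : m ≤ s := by
    have hcard : Fintype.card {i // x i ≠ 0} = s := by
      have h1 : (∑ ℓ, x ℓ) = ((Finset.univ.filter fun i => x i ≠ 0).card : ℝ) := by
        rw [Finset.card_filter]
        push_cast
        refine Finset.sum_congr rfl fun i _ => ?_
        rcases hx01 i with h | h <;> simp [h]
      rw [h1] at hxs
      have h2 : (Finset.univ.filter fun i => x i ≠ 0).card = s := by exact_mod_cast hxs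
      rw [Fintype.card_subtype, h2]
    have h1 : (A.transpose * Matrix.diagonal x * A).rank ≤ (Matrix.diagonal x).rank := by
      calc (A.transpose * Matrix.diagonal x * A).rank
          ≤ (A.transpose * Matrix.diagonal x).rank := Matrix.rank_mul_le_left _ _
        _ ≤ (Matrix.diagonal x).rank := Matrix.rank_mul_le_right _ _
    have h2 : (A.transpose * Matrix.diagonal x * A).rank = m := by
      rw [Matrix.rank_of_isUnit _ hpd.isUnit, Fintype.card_fin]
    rw [h2, Matrix.rank_diagonal, hcard] at h1
    exact h1
  -- Aᵀ A = V (Σᵀ Σ) Vᵀ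
  have hCA : A.transpose * A = V * (Sg.transpose * Sg) * V.transpose := by
    rw [hsvd]
    simp only [Matrix.transpose_mul, Matrix.transpose_transpose]
    simp only [Matrix.mul_assoc]
    rw [← Matrix.mul_assoc U.transpose U, hU, Matrix.one_mul]
  -- ΣᵀΣ is diagonal with entries σ²
  have hSgSg : Sg.transpose * Sg
      = Matrix.diagonal (fun j : Fin m => σ (Fin.castLE hmn j) ^ 2) := by
    ext j j'
    rw [Matrix.mul_apply]
    by_cases hjj : j = j'
    · subst hjj
      rw [Matrix.diagonal_apply_eq]
      rw [Finset.sum_eq_single (Fin.castLE hmn j)]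
      · simp [hSgdef, pow_two]
      · intro i _ hi
        have : (i : ℕ) ≠ (j : ℕ) := fun h => hi (Fin.ext (by simp [h]))
        simp [hSgdef, this]
      · simp
    · rw [Matrix.diagonal_apply_ne _ hjj]
      apply Finset.sum_eq_zero
      intro i _
      have : (i : ℕ) ≠ (j : ℕ) ∨ (i : ℕ) ≠ (j' : ℕ) := by
        by_contra h
        push_neg at h
        exact hjj (Fin.ext (by omega))
      rcases this with h | h <;> simp [hSgdef, h]
  -- det (Aᵀ A) = ∏ σ²
  have hdetV : V.det * V.det = 1 := by
    have := congr_arg Matrix.det hV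
    rwa [Matrix.det_mul, Matrix.det_transpose, Matrix.det_one] at this
  have hdetC : (A.transpose * A).det = ∏ j : Fin m, σ (Fin.castLE hmn j) ^ 2 := by
    rw [hCA, hSgSg, Matrix.det_mul, Matrix.det_mul, Matrix.det_transpose,
      Matrix.det_diagonal]
    rw [mul_right_comm, hdetV, one_mul]
  -- Aᵀ diag(1-x) A is PSD
  have hd1 : (Matrix.diagonal (fun i => 1 - x i)).PosSemidef := by
    refine Matrix.posSemidef_diagonal_iff.mpr fun i => ?_
    rcases hx01 i with h | h <;> simp [h]
  have hN : (A.transpose * Matrix.diagonal (fun i => 1 - x i) * A).PosSemidef := by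
    have := hd1.conjTranspose_mul_mul_same A
    rwa [Matrix.conjTranspose_eq_transpose_of_trivial] at this
  have hsum : A.transpose * Matrix.diagonal x * A
      + A.transpose * Matrix.diagonal (fun i => 1 - x i) * A = A.transpose * A := by
    calc A.transpose * Matrix.diagonal x * A
        + A.transpose * Matrix.diagonal (fun i => 1 - x i) * A
        = A.transpose * (Matrix.diagonal x + Matrix.diagonal (fun i => 1 - x i)) * A := by
          rw [Matrix.mul_add, Matrix.add_mul]
      _ = A.transpose * A := by
          rw [Matrix.diagonal_add]
          simp
  have hle : (A.transpose * Matrix.diagonal x * A).det ≤ (A.transpose * A).det := by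
    rw [← hsum]
    exact det_le_det_add hpd hN
  have hpos : 0 < (A.transpose * Matrix.diagonal x * A).det := hpd.det_pos
  have hprodpos : 0 < ∏ j : Fin m, σ (Fin.castLE hmn j) ^ 2 := by
    rw [← hdetC]; linarith
  have hσpos : ∀ j : Fin m, 0 < σ (Fin.castLE hmn j) ^ 2 := by
    intro j
    rcases lt_or_eq_of_le (sq_nonneg (σ (Fin.castLE hmn j))) with h | h
    · exact h
    · exfalso
      have : ∏ j : Fin m, σ (Fin.castLE hmn j) ^ 2 = 0 :=
        Finset.prod_eq_zero (Finset.mem_univ j) h.symm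
      linarith
  -- RHS rewriting
  have hRHS : (∑ ℓ : Fin n, if (ℓ : ℕ) < s then Real.log (1 + σ ℓ ^ 2) else 0)
      = ∑ j : Fin m, Real.log (1 + σ (Fin.castLE hmn j) ^ 2) := by
    symm
    calc ∑ j : Fin m, Real.log (1 + σ (Fin.castLE hmn j) ^ 2)
        = ∑ j : Fin m, (fun ℓ : Fin n =>
            if (ℓ : ℕ) < s then Real.log (1 + σ ℓ ^ 2) else 0) (Fin.castLEEmb hmn j) := by
          refine Finset.sum_congr rfl fun j _ => ?_
          have hj : ((Fin.castLE hmn j : Fin n) : ℕ) < s := lt_of_lt_of_le j.isLt hms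
          simp only [Fin.castLEEmb_apply, hj, if_pos]
      _ = ∑ ℓ ∈ Finset.univ.map (Fin.castLEEmb hmn),
            (if (ℓ : ℕ) < s then Real.log (1 + σ ℓ ^ 2) else 0) :=
          (Finset.sum_map Finset.univ (Fin.castLEEmb hmn)
            (fun ℓ : Fin n => if (ℓ : ℕ) < s then Real.log (1 + σ ℓ ^ 2) else 0)).symm
      _ = ∑ ℓ : Fin n, (if (ℓ : ℕ) < s then Real.log (1 + σ ℓ ^ 2) else 0) := by
          refine Finset.sum_subset (Finset.subset_univ _) fun ℓ _ hℓ => ?_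
          have hℓm : m ≤ (ℓ : ℕ) := by
            by_contra h
            push_neg at h
            exact hℓ (Finset.mem_map.mpr ⟨⟨(ℓ : ℕ), h⟩, Finset.mem_univ _,
              by ext; simp⟩)
          rw [hσzero ℓ hℓm]
          simp
  rw [hSeq, hRHS]
  calc Real.log (A.transpose * Matrix.diagonal x * A).det
      ≤ Real.log (A.transpose * A).det := Real.log_le_log hpos hle
    _ = ∑ j : Fin m, Real.log (σ (Fin.castLE hmn j) ^ 2) := by
        rw [hdetC, Real.log_prod]
        intro j _
        exact (hσpos j).ne'
    _ ≤ ∑ j : Fin m, Real.log (1 + σ (Fin.castLE hmn j) ^ 2) := by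
        apply Finset.sum_le_sum
        intro j _
        exact Real.log_le_log (hσpos j) (by linarith)
end
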